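/- Intertwining property of the adiabatic propagator: let P(t) be a C¹ family of orthogonal projections and U_a(t) the propagator generated by H_a(t) = P(t) H(t) P(t) + iε [∂_t P(t), P(t)] via iε ∂_t U_a(t) = H_a(t) U_a(t), U_a(0) = 1 (with H(t) = H(t)* bounded, say). Then U_a(t) P(0) = P(t) U_a(t) for all t. -/

import Mathlib

open ContinuousLinearMap

/-- If `‖f'‖ ≤ g ⬝ ‖f‖` with `g` continuous and `f 0 = 0`, then `f t = 0` for `t ≥ 0`. -/
lemma zero_of_norm_deriv_le_nonneg {E : Type*} [NormedAddCommGroup E] [NormedSpace ℝ E]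
    (f f' : ℝ → E) (g : ℝ → ℝ)
    (hf : ∀ s, HasDerivAt f (f' s) s) (hg : Continuous g)
    (hb : ∀ s, ‖f' s‖ ≤ g s * ‖f s‖) (h0 : f 0 = 0) {t : ℝ} (ht : 0 ≤ t) : f t = 0 := by
  obtain ⟨C, hC⟩ := (isCompact_Icc (a := (0:ℝ)) (b := t)).exists_bound_of_continuousOn
    hg.continuousOn
  have hgr := norm_le_gronwallBound_of_norm_deriv_right_le
    (f := f) (f' := f') (δ := 0) (K := C) (ε := 0) (a := 0) (b := t)
    (fun s _ => (hf s).continuousAt.continuousWithinAt)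
    (fun s _ => (hf s).hasDerivWithinAt)
    (by simp [h0])
    (fun x hx => by
      have h1 := hb x
      have h2 : g x ≤ C := le_trans (le_abs_self _) (hC x ⟨hx.1, le_of_lt hx.2⟩)
      have : g x * ‖f x‖ ≤ C * ‖f x‖ := mul_le_mul_of_nonneg_right h2 (norm_nonneg _)
      linarith)
    t ⟨ht, le_refl t⟩
  have hz : gronwallBound 0 C 0 (t - 0) = 0 := by rw [gronwallBound_ε0]; simp
  rw [hz] at hgr
  exact norm_le_zero_iff.mp hgr

/-- If `‖f'‖ ≤ g ⬝ ‖f‖` with `g` continuous and `f 0 = 0`, then `f ≡ 0`. -/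
lemma zero_of_norm_deriv_le {E : Type*} [NormedAddCommGroup E] [NormedSpace ℝ E]
    (f f' : ℝ → E) (g : ℝ → ℝ)
    (hf : ∀ s, HasDerivAt f (f' s) s) (hg : Continuous g)
    (hb : ∀ s, ‖f' s‖ ≤ g s * ‖f s‖) (h0 : f 0 = 0) (t : ℝ) : f t = 0 := by
  rcases le_or_gt 0 t with ht | ht
  · exact zero_of_norm_deriv_le_nonneg f f' g hf hg hb h0 ht
  · have hf' : ∀ s : ℝ, HasDerivAt (fun u => f (-u)) ((-1 : ℝ) • f' (-s)) s := by
      intro s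
      exact (hf (-s)).scomp s (by simpa using (hasDerivAt_neg s))
    have := zero_of_norm_deriv_le_nonneg (fun u => f (-u)) (fun u => (-1 : ℝ) • f' (-u))
      (fun u => g (-u)) hf' (hg.comp continuous_neg)
      (fun s => by simpa using hb (-s)) (by simpa using h0) (t := -t) (by linarith)
    simpa using this

theorem adiabatic_propagator_intertwines
    {H : Type*} [NormedAddCommGroup H] [InnerProductSpace ℂ H] [CompleteSpace H]
    (ε : ℝ) (hε : 0 < ε)
    (Hm : ℝ → H →L[ℂ] H)
    (hHcont : Continuous Hm)
    (hHsa : ∀ t, IsSelfAdjoint (Hm t))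
    (P P' : ℝ → H →L[ℂ] H)
    (hPderiv : ∀ t, HasDerivAt P (P' t) t)
    (hP'cont : Continuous P')
    (hidem : ∀ t, P t ∘L P t = P t)
    (hPsa : ∀ t, ContinuousLinearMap.adjoint (P t) = P t)
    (Ha : ℝ → H →L[ℂ] H)
    (hHa : ∀ t, Ha t = P t ∘L Hm t ∘L P t
      + (Complex.I * (ε : ℂ)) • (P' t ∘L P t - P t ∘L P' t))
    (Ua Ua' : ℝ → H →L[ℂ] H)
    (hUaderiv : ∀ t, HasDerivAt Ua (Ua' t) t)
    (hUaeq : ∀ t, (Complex.I * (ε : ℂ)) • Ua' t = Ha t ∘L Ua t)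
    (hUa0 : Ua 0 = 1) :
    ∀ t : ℝ, Ua t ∘L P 0 = P t ∘L Ua t := by
  set ι : ℂ := Complex.I * (ε : ℂ) with hι
  have hQ : ∀ t, P t * P t = P t := hidem
  -- derivative of idempotency
  have hP'eq : ∀ t, P' t * P t + P t * P' t = P' t := by
    intro t
    have h1 : HasDerivAt (fun s => P s * P s) (P' t * P t + P t * P' t) t :=
      (hPderiv t).mul (hPderiv t)
    have h2 : (fun s => P s * P s) = P := funext fun s => hQ s
    rw [h2] at h1
    exact h1.unique (hPderiv t)
  have hPPP : ∀ t, P t * P' t * P t = 0 := by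
    intro t
    have h := congrArg (fun X => P t * X * P t) (hP'eq t)
    simp only [mul_add, add_mul] at h
    have e1 : P t * (P' t * P t) * P t = P t * P' t * P t := by
      rw [mul_assoc (P t) (P' t * P t) (P t), mul_assoc (P' t) (P t) (P t), hQ t,
        ← mul_assoc]
    have e2 : P t * (P t * P' t) * P t = P t * P' t * P t := by
      rw [← mul_assoc (P t) (P t) (P' t), hQ t]
    rw [e1, e2] at h
    rwa [add_eq_right] at h
  -- the commutator identity [Ha, P] = ι • P'
  have key : ∀ t, Ha t * P t - P t * Ha t = ι • P' t := by
    intro t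
    have hHa' : Ha t = P t * Hm t * P t + ι • (P' t * P t - P t * P' t) := by
      rw [hHa t]; rfl
    set A : H →L[ℂ] H := P t * Hm t * P t with hA
    set B : H →L[ℂ] H := P' t * P t - P t * P' t with hB
    have expand : (A + ι • B) * P t - P t * (A + ι • B)
        = (A * P t - P t * A) + ι • (B * P t - P t * B) := by
      rw [add_mul, mul_add, smul_mul_assoc, mul_smul_comm, smul_sub]
      abel
    have cA : A * P t - P t * A = 0 := by
      have c1 : A * P t = P t * Hm t * P t := by
        rw [hA, mul_assoc (P t * Hm t) (P t) (P t), hQ t]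
      have c2 : P t * A = P t * Hm t * P t := by
        rw [hA, ← mul_assoc (P t) (P t * Hm t) (P t), ← mul_assoc (P t) (P t) (Hm t), hQ t]
      rw [c1, c2, sub_self]
    have cB : B * P t - P t * B = P' t := by
      rw [hB]
      simp only [sub_mul, mul_sub]
      have d1 : P' t * P t * P t = P' t * P t := by rw [mul_assoc, hQ t]
      have d2 : P t * P' t * P t = 0 := hPPP t
      have d3 : P t * (P' t * P t) = 0 := by rw [← mul_assoc]; exact hPPP t
      have d4 : P t * (P t * P' t) = P t * P' t := by rw [← mul_assoc, hQ t]
      rw [d1, d2, d3, d4, sub_zero, zero_sub, sub_neg_eq_add, hP'eq t]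
    rw [hHa', expand, cA, cB, zero_add]
  -- set up the difference D
  set D : ℝ → H →L[ℂ] H := fun t => Ua t * P 0 - P t * Ua t with hD
  set D' : ℝ → H →L[ℂ] H := fun t => Ua' t * P 0 - (P' t * Ua t + P t * Ua' t) with hD'
  have hDderiv : ∀ t, HasDerivAt D (D' t) t := by
    intro t
    exact ((hUaderiv t).mul_const (P 0)).sub ((hPderiv t).mul (hUaderiv t))
  have hDeq : ∀ t, ι • D' t = Ha t * D t := by
    intro t
    have hU : ι • Ua' t = Ha t * Ua t := hUaeq t
    have e1 : ι • D' t = (ι • Ua' t) * P 0 - (ι • (P' t * Ua t) + P t * (ι • Ua' t)) := by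
      simp only [hD']
      rw [smul_sub, smul_add, smul_mul_assoc, mul_smul_comm]
    rw [e1, hU]
    have hHP : ι • P' t + P t * Ha t = Ha t * P t := by
      rw [← key t]; abel
    have final : Ha t * Ua t * P 0 - (ι • (P' t * Ua t) + P t * (Ha t * Ua t))
        = Ha t * (Ua t * P 0 - P t * Ua t) := by
      rw [mul_sub]
      have : ι • (P' t * Ua t) + P t * (Ha t * Ua t) = Ha t * (P t * Ua t) := by
        rw [← mul_assoc, ← mul_assoc, ← smul_mul_assoc, ← add_mul, hHP, mul_assoc]
      rw [this, mul_assoc]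
    rw [final]
  -- Ha is continuous
  have hPcont : Continuous P :=
    continuous_iff_continuousAt.mpr fun t => (hPderiv t).continuousAt
  have hHacont : Continuous Ha := by
    have : Ha = fun t => P t ∘L Hm t ∘L P t
        + (Complex.I * (ε : ℂ)) • (P' t ∘L P t - P t ∘L P' t) := funext hHa
    rw [this]
    have h1 : Continuous fun t => P t * Hm t * P t :=
      ((hPcont.mul hHcont).mul hPcont)
    have h2 : Continuous fun t => P' t * P t - P t * P' t :=
      (hP'cont.mul hPcont).sub (hPcont.mul hP'cont)
    exact h1.add (h2.const_smul (Complex.I * (ε : ℂ)))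
  have hιnorm : ‖ι‖ = ε := by
    rw [hι, norm_mul, Complex.norm_I, one_mul, Complex.norm_real,
      Real.norm_of_nonneg (le_of_lt hε)]
  have hbound : ∀ t, ‖D' t‖ ≤ (‖Ha t‖ / ε) * ‖D t‖ := by
    intro t
    have h1 : ‖ι • D' t‖ = ε * ‖D' t‖ := by rw [norm_smul, hιnorm]
    have h2 : ‖Ha t * D t‖ ≤ ‖Ha t‖ * ‖D t‖ := norm_mul_le _ _
    rw [hDeq t] at h1
    rw [div_mul_eq_mul_div, le_div_iff₀ hε, mul_comm (‖D' t‖) ε, ← h1]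
    exact h2
  have hgcont : Continuous fun t => ‖Ha t‖ / ε :=
    (hHacont.norm).div_const ε
  have hD0 : D 0 = 0 := by
    simp [hD, hUa0]
  have hDzero : ∀ t, D t = 0 :=
    zero_of_norm_deriv_le D D' (fun t => ‖Ha t‖ / ε) hDderiv hgcont hbound hD0
  intro t
  have h := hDzero t
  rw [hD] at h
  exact sub_eq_zero.mp h
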